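/- In Example 1, the QP min ‖u − (−2, 0)‖² over u ∈ ℝ² subject to u₁ ≤ 1 and −u₁ − x·u₂ ≤ −(1+x) has solution π_qp(x) = (1, 1) for x ∈ (0, 1/3], and π_qp(x) = ((1 + x − 2x²)/(1 + x²), (3x + x²)/(1 + x²)) for other x ∈ [−2, 2] (with x ≠ 0 handled by the formula, which gives (1,0) at x=0); in particular the solution map is discontinuous at x = 0, since the limit from the right along x ∈ (0,1/3] is (1,1) while π_qp(0) = (1,0). -/

import Mathlib

/-- The constraint set of Example 1. -/
def K1 (x : ℝ) : Set (EuclideanSpace ℝ (Fin 2)) :=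
  {u | u 0 ≤ 1 ∧ -(u 0) - x * u 1 ≤ -(1 + x)}

/-- The desired point `π_des = (−2, 0)` of Example 1. -/
noncomputable def pdes1 : EuclideanSpace ℝ (Fin 2) :=
  (WithLp.equiv 2 (Fin 2 → ℝ)).symm ![-2, 0]

noncomputable def mk2 (a b : ℝ) : EuclideanSpace ℝ (Fin 2) :=
  (WithLp.equiv 2 (Fin 2 → ℝ)).symm ![a, b]

@[simp] lemma mk2_zero (a b : ℝ) : mk2 a b 0 = a := rfl
@[simp] lemma mk2_one (a b : ℝ) : mk2 a b 1 = b := rfl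

lemma normsq (v : EuclideanSpace ℝ (Fin 2)) : ‖v‖^2 = (v 0)^2 + (v 1)^2 := by
  rw [EuclideanSpace.norm_eq, Real.sq_sqrt (by positivity)]
  simp [Fin.sum_univ_two]

lemma dist_sq_le {a u : EuclideanSpace ℝ (Fin 2)} (h : ‖a - pdes1‖ ≤ ‖u - pdes1‖) :
    (a 0 + 2)^2 + (a 1)^2 ≤ (u 0 + 2)^2 + (u 1)^2 := by
  have h2 : ‖a - pdes1‖^2 ≤ ‖u - pdes1‖^2 := pow_le_pow_left₀ (norm_nonneg _) h 2
  rw [normsq, normsq] at h2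
  have e0 : (a - pdes1) 0 = a 0 + 2 := by simp [pdes1]
  have e1 : (a - pdes1) 1 = a 1 := by simp [pdes1]
  have f0 : (u - pdes1) 0 = u 0 + 2 := by simp [pdes1]
  have f1 : (u - pdes1) 1 = u 1 := by simp [pdes1]
  rw [e0, e1, f0, f1] at h2
  linarith

lemma min_unique {x : ℝ} {a : EuclideanSpace ℝ (Fin 2)} (c0 c1 : ℝ)
    (ha : a ∈ K1 x) (hc : mk2 c0 c1 ∈ K1 x)
    (hma : ∀ u ∈ K1 x, ‖a - pdes1‖ ≤ ‖u - pdes1‖)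
    (hmc : ∀ u ∈ K1 x, (c0 + 2)^2 + c1^2 ≤ (u 0 + 2)^2 + (u 1)^2) :
    a 0 = c0 ∧ a 1 = c1 := by
  have h1 : (a 0 + 2)^2 + (a 1)^2 ≤ (c0 + 2)^2 + c1^2 := by
    have := dist_sq_le (hma _ hc); simpa using this
  obtain ⟨ha1, ha2⟩ := ha
  obtain ⟨hc1, hc2⟩ := hc
  simp only [mk2_zero, mk2_one] at hc1 hc2
  have hmK : mk2 ((a 0 + c0)/2) ((a 1 + c1)/2) ∈ K1 x := by
    refine ⟨?_, ?_⟩ <;> simp only [mk2_zero, mk2_one] <;> nlinarith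
  have h3 := hmc _ hmK
  simp only [mk2_zero, mk2_one] at h3
  constructor <;> nlinarith [sq_nonneg (a 0 - c0), sq_nonneg (a 1 - c1)]

lemma caseA_opt (x u0 u1 : ℝ) (hx0 : 0 < x) (hx3 : x ≤ 1/3)
    (h1 : u0 ≤ 1) (h2 : 1 + x ≤ u0 + x * u1) : 10 ≤ (u0+2)^2 + u1^2 := by
  have key : 0 ≤ x * (u1 - 1 - 3*(1-u0)) := by nlinarith
  have hu1 : 1 + 3*(1-u0) ≤ u1 := by
    by_contra h
    push_neg at h
    nlinarith [mul_pos hx0 (by linarith : (0:ℝ) < 1 + 3*(1-u0) - u1)]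
  nlinarith [mul_nonneg (by linarith : (0:ℝ) ≤ u1 - (1+3*(1-u0)))
    (by linarith : (0:ℝ) ≤ u1 + (1+3*(1-u0))), sq_nonneg (1-u0)]

lemma caseB_opt (x u0 u1 : ℝ) (hx : -2 ≤ x)
    (h2 : 1 + x ≤ u0 + x * u1) :
    ((1 + x - 2*x^2)/(1+x^2) + 2)^2 + ((3*x + x^2)/(1+x^2))^2 ≤ (u0+2)^2 + u1^2 := by
  have hd : (0:ℝ) < 1 + x^2 := by positivity
  have key : (((1 + x - 2*x^2)/(1+x^2) + 2)^2 + ((3*x + x^2)/(1+x^2))^2) * (1+x^2)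
      = (3+x)^2 := by field_simp; ring
  have h3 : (3+x)^2 ≤ ((u0+2) + x*u1)^2 := by
    nlinarith [mul_nonneg (by linarith : (0:ℝ) ≤ (u0+2) + x*u1 - (3+x))
      (by linarith : (0:ℝ) ≤ (u0+2) + x*u1 + (3+x))]
  have h4 : ((u0+2) + x*u1)^2 ≤ (1+x^2) * ((u0+2)^2 + u1^2) := by
    nlinarith [sq_nonneg (x*(u0+2) - u1)]
  nlinarith

/-- the QP of Example 1 has the stated piecewise solution and is
discontinuous at `x = 0`. -/
theorem example1_solution (π : ℝ → EuclideanSpace ℝ (Fin 2))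
    (hπ : ∀ x ∈ Set.Icc (-2 : ℝ) 2, π x ∈ K1 x ∧
      ∀ u ∈ K1 x, ‖π x - pdes1‖ ≤ ‖u - pdes1‖) :
    (∀ x ∈ Set.Ioc (0 : ℝ) (1 / 3), π x 0 = 1 ∧ π x 1 = 1) ∧
    (∀ x ∈ Set.Icc (-2 : ℝ) 2, x ∉ Set.Ioc (0 : ℝ) (1 / 3) →
      π x 0 = (1 + x - 2 * x ^ 2) / (1 + x ^ 2) ∧
      π x 1 = (3 * x + x ^ 2) / (1 + x ^ 2)) ∧
    ¬ ContinuousWithinAt π (Set.Icc (-2 : ℝ) 2) 0 := by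
  have partA : ∀ x ∈ Set.Ioc (0 : ℝ) (1 / 3), π x 0 = 1 ∧ π x 1 = 1 := by
    intro x hx
    obtain ⟨hx0, hx3⟩ := hx
    have hxI : x ∈ Set.Icc (-2:ℝ) 2 := ⟨by linarith, by linarith⟩
    obtain ⟨hmem, hmin⟩ := hπ x hxI
    have hc : mk2 1 1 ∈ K1 x := by
      refine ⟨?_, ?_⟩ <;> simp only [mk2_zero, mk2_one] <;> linarith
    refine min_unique 1 1 hmem hc hmin ?_
    intro u hu
    have := caseA_opt x (u 0) (u 1) hx0 hx3 hu.1 (by linarith [hu.2])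
    nlinarith
  have partB : ∀ x ∈ Set.Icc (-2 : ℝ) 2, x ∉ Set.Ioc (0 : ℝ) (1 / 3) →
      π x 0 = (1 + x - 2 * x ^ 2) / (1 + x ^ 2) ∧
      π x 1 = (3 * x + x ^ 2) / (1 + x ^ 2) := by
    intro x hxI hxn
    obtain ⟨hmem, hmin⟩ := hπ x hxI
    have hd : (0:ℝ) < 1 + x^2 := by positivity
    have hx' : x ≤ 0 ∨ 1/3 < x := by
      by_contra h
      push_neg at h
      exact hxn h
    have hc : mk2 ((1 + x - 2*x^2)/(1+x^2)) ((3*x + x^2)/(1+x^2)) ∈ K1 x := by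
      refine ⟨?_, ?_⟩ <;> simp only [mk2_zero, mk2_one]
      · rw [div_le_one hd]
        rcases hx' with h | h <;> nlinarith
      · have : -((1 + x - 2*x^2)/(1+x^2)) - x * ((3*x + x^2)/(1+x^2)) = -(1+x) := by
          field_simp; ring
        rw [this]
    have := min_unique ((1 + x - 2*x^2)/(1+x^2)) ((3*x + x^2)/(1+x^2)) hmem hc hmin ?_
    · exact ⟨this.1, this.2⟩
    · intro u hu
      exact caseB_opt x (u 0) (u 1) hxI.1 (by linarith [hu.2])
  refine ⟨partA, partB, ?_⟩
  intro hcont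
  have hπ01 : π 0 1 = 0 := by
    have := (partB 0 ⟨by norm_num, by norm_num⟩ (by simp)).2
    simpa using this
  have hproj : Continuous (fun v : EuclideanSpace ℝ (Fin 2) => v 1) :=
    (EuclideanSpace.proj (1 : Fin 2)).continuous
  have hc1 : Filter.Tendsto (fun x => π x 1) (nhdsWithin 0 (Set.Icc (-2:ℝ) 2))
      (nhds (π 0 1)) := (hproj.tendsto _).comp hcont
  have hseq : Filter.Tendsto (fun n : ℕ => (1:ℝ)/(n+3)) Filter.atTop (nhds 0) := by
    have h := (Filter.tendsto_add_atTop_iff_nat 2).2 (tendsto_one_div_add_atTop_nhds_zero_nat :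
      Filter.Tendsto (fun n : ℕ => 1 / ((n : ℝ) + 1)) Filter.atTop (nhds 0))
    have he : (fun n : ℕ => (1:ℝ)/(n+3)) = fun n : ℕ => 1/((↑(n+2):ℝ)+1) := by
      funext n; push_cast; ring_nf
    rw [he]; exact h
  have hmemIoc : ∀ n : ℕ, (1:ℝ)/(n+3) ∈ Set.Ioc (0:ℝ) (1/3) := by
    intro n
    constructor
    · positivity
    · rw [div_le_div_iff₀ (by positivity) (by norm_num)]
      push_cast; linarith [Nat.cast_nonneg (α := ℝ) n]
  have hseqW : Filter.Tendsto (fun n : ℕ => (1:ℝ)/(n+3)) Filter.atTop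
      (nhdsWithin 0 (Set.Icc (-2:ℝ) 2)) := by
    refine tendsto_nhdsWithin_of_tendsto_nhds_of_eventually_within _ hseq ?_
    filter_upwards with n
    have := hmemIoc n
    exact ⟨by linarith [this.1], by linarith [this.2]⟩
  have hfin : Filter.Tendsto (fun n : ℕ => π ((1:ℝ)/(n+3)) 1) Filter.atTop
      (nhds (π 0 1)) := hc1.comp hseqW
  have hone : (fun n : ℕ => π ((1:ℝ)/(n+3)) 1) = fun _ => (1:ℝ) := by
    funext n
    exact (partA _ (hmemIoc n)).2
  rw [hone, hπ01] at hfin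
  have := tendsto_nhds_unique hfin tendsto_const_nhds
  norm_num at this
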